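/- Let F be a field, A, B disjoint subsets of F with |A| = k−i, |B| = i. Suppose f_1,…,f_i are polynomials of degree ≤ i−1 that are linearly independent over F, and g_1,…,g_{k−i} are polynomials of degree ≤ k−i−1 that are linearly independent over F. Let f_0 = ∏_{a∈A}(x−a) and g_0 = ∏_{b∈B}(x−b). Then the k polynomials f_1·f_0, …, f_i·f_0, g_1·g_0, …, g_{k−i}·g_0 are linearly independent over F. -/

import Mathlib

open Polynomial Finset

theorem stmt_3 {F : Type*} [Field F] (k i : ℕ) (hi : 1 ≤ i) (hik : i ≤ k - 1)
    (A B : Finset F) (hAB : Disjoint A B) (hA : A.card = k - i) (hB : B.card = i)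
    (f : Fin i → F[X]) (hf : ∀ j, (f j).degree ≤ ((i - 1 : ℕ) : WithBot ℕ))
    (hfi : LinearIndependent F f)
    (g : Fin (k - i) → F[X]) (hg : ∀ j, (g j).degree ≤ ((k - i - 1 : ℕ) : WithBot ℕ))
    (hgi : LinearIndependent F g) :
    LinearIndependent F
      (Sum.elim (fun j => f j * ∏ a ∈ A, (X - C a))
        (fun j => g j * ∏ b ∈ B, (X - C b))) := by
  have hk : i + 1 ≤ k := by omega
  set f0 : F[X] := ∏ a ∈ A, (X - C a) with hf0
  set g0 : F[X] := ∏ b ∈ B, (X - C b) with hg0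
  have hf0ne : f0 ≠ 0 := prod_ne_zero_iff.mpr fun a _ => X_sub_C_ne_zero a
  have hg0ne : g0 ≠ 0 := prod_ne_zero_iff.mpr fun b _ => X_sub_C_ne_zero b
  have Mker : ∀ p : F[X], p ≠ 0 → LinearMap.ker (LinearMap.mulRight F p) = ⊥ := by
    intro p hp
    rw [LinearMap.ker_eq_bot']
    intro m hm
    simp only [LinearMap.mulRight_apply] at hm
    rcases mul_eq_zero.mp hm with h | h
    · exact h
    · exact absurd h hp
  have li1 : LinearIndependent F (fun j => f j * f0) := by
    have := hfi.map' (LinearMap.mulRight F f0) (Mker f0 hf0ne)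
    simpa [Function.comp_def, LinearMap.mulRight_apply] using this
  have li2 : LinearIndependent F (fun j => g j * g0) := by
    have := hgi.map' (LinearMap.mulRight F g0) (Mker g0 hg0ne)
    simpa [Function.comp_def, LinearMap.mulRight_apply] using this
  refine li1.sum_type li2 ?_
  -- spans as maps
  have hr1 : Set.range (fun j => f j * f0) = (LinearMap.mulRight F f0) '' Set.range f := by
    rw [← Set.range_comp]; rfl
  have hr2 : Set.range (fun j => g j * g0) = (LinearMap.mulRight F g0) '' Set.range g := by
    rw [← Set.range_comp]; rfl
  rw [Submodule.disjoint_def]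
  intro x hx1 hx2
  rw [hr1, ← Submodule.map_span] at hx1
  rw [hr2, ← Submodule.map_span] at hx2
  obtain ⟨P, hP, rfl⟩ := hx1
  obtain ⟨Q, hQ, hPQ⟩ := hx2
  simp only [LinearMap.mulRight_apply] at hPQ ⊢
  -- degree bound on Q
  have hQdeg : Q.degree ≤ ((k - i - 1 : ℕ) : WithBot ℕ) := by
    have : Submodule.span F (Set.range g) ≤ Polynomial.degreeLE F ((k - i - 1 : ℕ) : WithBot ℕ) := by
      rw [Submodule.span_le]
      rintro _ ⟨j, rfl⟩
      exact (Polynomial.mem_degreeLE).mpr (hg j)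
    exact (Polynomial.mem_degreeLE).mp (this hQ)
  -- Q vanishes on A
  have hQeval : ∀ a ∈ A, Q.eval a = 0 := by
    intro a ha
    have hfa : f0.eval a = 0 := by
      rw [hf0, eval_prod]
      exact Finset.prod_eq_zero ha (by simp)
    have hga : g0.eval a ≠ 0 := by
      rw [hg0, eval_prod]
      refine Finset.prod_ne_zero_iff.mpr fun b hb => ?_
      have : a ≠ b := fun h => (Finset.disjoint_left.mp hAB ha) (h ▸ hb)
      simp [sub_eq_zero, this]
    have : Q.eval a * g0.eval a = 0 := by
      have := congrArg (Polynomial.eval a) hPQ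
      simp only [eval_mul] at this
      rw [this, hfa, mul_zero]
    exact (mul_eq_zero.mp this).resolve_right hga
  have hQ0 : Q = 0 := by
    refine Polynomial.eq_zero_of_natDegree_lt_card_of_eval_eq_zero' Q A hQeval ?_
    have hnd : Q.natDegree ≤ k - i - 1 := Polynomial.natDegree_le_iff_degree_le.mpr hQdeg
    omega
  rw [hQ0, zero_mul] at hPQ
  exact hPQ.symm
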